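/- Let Γ denote the gamma function, k = d - 1 ≥ 1, and n ≥ 2. Then the exact parametric complexity formula COMP(K) = log vol(K) - (k/2) log(πk) - (1/2) log(k/2) + (nk/2) log(nk/(2e)) - log Γ(k(n-1)/2) admits the asymptotic expansion COMP(K) = (d/2) log(n/(2π)) + log vol(K) - (3d² - 1)/(12(d-1)n) - d(d+1)/(12(d-1)n²) + O(n^{-3}) as n → ∞. -/

import Mathlib

open Real Filter Asymptotics Topology

noncomputable def bf (x : ℝ) : ℝ := (x - 1/2) * Real.log x - x
noncomputable def bg (y : ℝ) : ℝ := (y + 1/2) * Real.log (1 + 1/y) - 1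
noncomputable def bmu (x : ℝ) : ℝ := ∑' j : ℕ, bg (x + j)

lemma bg_eq {y : ℝ} (hy : 0 < y) : bg y = bf (y+1) - bf y - Real.log y := by
  have h1 : (1 : ℝ) + 1/y = (y+1)/y := by field_simp
  have h2 : Real.log ((y+1)/y) = Real.log (y+1) - Real.log y :=
    Real.log_div (by positivity) (ne_of_gt hy)
  simp only [bg, bf, h1, h2]
  ring

-- key inequality 1 : log((1+u)/(1-u)) ≥ 2u + (2/3)u³
lemma log_ratio_lower {u : ℝ} (h0 : 0 ≤ u) (h1 : u < 1) :
    2*u + 2/3*u^3 ≤ Real.log (1+u) - Real.log (1-u) := by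
  set F : ℝ → ℝ := fun v => Real.log (1+v) - Real.log (1-v) - 2*v - 2/3*v^3 with hF
  have hd : ∀ v ∈ Set.Icc (0:ℝ) u, HasDerivAt F (1/(1+v) + 1/(1-v) - 2 - 2*v^2) v := by
    intro v hv
    have hv1 : (0:ℝ) < 1 + v := by nlinarith [hv.1]
    have hv2 : (0:ℝ) < 1 - v := by nlinarith [hv.2]
    have d1 : HasDerivAt (fun v : ℝ => Real.log (1+v)) (1/(1+v)) v := by
      simpa [Function.comp_def] using ((Real.hasDerivAt_log (ne_of_gt hv1)).comp v
        (((hasDerivAt_id v).const_add 1)))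
    have d2 : HasDerivAt (fun v : ℝ => Real.log (1-v)) (-(1/(1-v))) v := by
      have : HasDerivAt (fun v : ℝ => 1 - v) (-1) v := by
        simpa using ((hasDerivAt_id v).const_sub 1)
      simpa [div_eq_mul_inv, Function.comp_def] using ((Real.hasDerivAt_log (ne_of_gt hv2)).comp v this)
    have d3 : HasDerivAt (fun v : ℝ => 2*v) 2 v := by
      simpa using (hasDerivAt_id v).const_mul 2
    have d4 : HasDerivAt (fun v : ℝ => 2/3*v^3) (2*v^2) v := by
      have := (hasDerivAt_pow 3 v).const_mul (2/3 : ℝ)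
      exact this.congr_deriv (by norm_num; ring)
    have := ((d1.sub d2).sub d3).sub d4
    exact this.congr_deriv (by ring)
  have hmono : MonotoneOn F (Set.Icc 0 u) := by
    apply monotoneOn_of_deriv_nonneg (convex_Icc 0 u)
    · exact fun v hv => ((hd v hv).continuousAt.continuousWithinAt)
    · intro v hv
      rw [interior_Icc] at hv
      exact ((hd v (Set.mem_Icc_of_Ioo hv)).differentiableAt).differentiableWithinAt
    · intro v hv
      rw [interior_Icc] at hv
      rw [((hd v (Set.mem_Icc_of_Ioo hv)).deriv)]
      have hv1 : (0:ℝ) < 1 + v := by nlinarith [hv.1]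
      have hv2 : (0:ℝ) < 1 - v := by nlinarith [hv.2, h1]
      have h2 : (0:ℝ) < (1+v)*(1-v) := mul_pos hv1 hv2
      have heq : 1/(1+v) + 1/(1-v) - 2 - 2*v^2 = (2*v^4) / ((1+v)*(1-v)) := by
        field_simp
        ring
      rw [heq]
      positivity
  have h00 : F 0 = 0 := by simp [hF]
  have := hmono (Set.left_mem_Icc.2 h0) (Set.right_mem_Icc.2 h0) h0
  rw [h00] at this
  simp only [hF] at this
  linarith

-- key inequality 2 : log((1+u)/(1-u)) ≤ 2u + (2/3)u³/(1-u²)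
lemma log_ratio_upper {u : ℝ} (h0 : 0 ≤ u) (h1 : u < 1) :
    Real.log (1+u) - Real.log (1-u) ≤ 2*u + 2/3*u^3/(1-u^2) := by
  set F : ℝ → ℝ := fun v => 2*v + 2/3*(v^3/(1-v^2)) - (Real.log (1+v) - Real.log (1-v)) with hF
  have hd : ∀ v ∈ Set.Icc (0:ℝ) u,
      HasDerivAt F (2 + 2/3*((3*v^2*(1-v^2) - v^3*(-(2*v)))/(1-v^2)^2)
        - (1/(1+v) + 1/(1-v))) v := by
    intro v hv
    have hv1 : (0:ℝ) < 1 + v := by nlinarith [hv.1]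
    have hv2 : (0:ℝ) < 1 - v := by nlinarith [hv.2, h1]
    have hv3 : (0:ℝ) < 1 - v^2 := by nlinarith
    have d1 : HasDerivAt (fun v : ℝ => Real.log (1+v)) (1/(1+v)) v := by
      simpa [Function.comp_def] using ((Real.hasDerivAt_log (ne_of_gt hv1)).comp v
        (((hasDerivAt_id v).const_add 1)))
    have d2 : HasDerivAt (fun v : ℝ => Real.log (1-v)) (-(1/(1-v))) v := by
      have : HasDerivAt (fun v : ℝ => 1 - v) (-1) v := by
        simpa using ((hasDerivAt_id v).const_sub 1)
      simpa [div_eq_mul_inv, Function.comp_def] using ((Real.hasDerivAt_log (ne_of_gt hv2)).comp v this)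
    have d3 : HasDerivAt (fun v : ℝ => 2*v) 2 v := by
      simpa using (hasDerivAt_id v).const_mul 2
    have dnum : HasDerivAt (fun v : ℝ => v^3) (3*v^2) v := by
      simpa using hasDerivAt_pow 3 v
    have dden : HasDerivAt (fun v : ℝ => 1 - v^2) (-(2*v)) v := by
      have := (hasDerivAt_pow 2 v).const_sub 1
      simpa using this
    have d4 : HasDerivAt (fun v : ℝ => v^3/(1-v^2))
        ((3*v^2*(1-v^2) - v^3*(-(2*v)))/(1-v^2)^2) v :=
      dnum.div dden (ne_of_gt hv3)
    have d4' := d4.const_mul (2/3 : ℝ)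
    have := (d3.add d4').sub (d1.sub d2)
    exact this.congr_deriv (by ring)
  have hmono : MonotoneOn F (Set.Icc 0 u) := by
    apply monotoneOn_of_deriv_nonneg (convex_Icc 0 u)
    · exact fun v hv => ((hd v hv).continuousAt.continuousWithinAt)
    · intro v hv
      rw [interior_Icc] at hv
      exact ((hd v (Set.mem_Icc_of_Ioo hv)).differentiableAt).differentiableWithinAt
    · intro v hv
      rw [interior_Icc] at hv
      rw [((hd v (Set.mem_Icc_of_Ioo hv)).deriv)]
      have hv1 : (0:ℝ) < 1 + v := by nlinarith [hv.1]
      have hv2 : (0:ℝ) < 1 - v := by nlinarith [hv.2, h1]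
      have hv3 : (0:ℝ) < 1 - v^2 := by nlinarith
      have heq : 2 + 2/3*((3*v^2*(1-v^2) - v^3*(-(2*v)))/(1-v^2)^2)
          - (1/(1+v) + 1/(1-v)) = (4/3*v^4)/(1-v^2)^2 := by
        field_simp
        ring
      rw [heq]
      positivity
  have h00 : F 0 = 0 := by simp [hF]
  have := hmono (Set.left_mem_Icc.2 h0) (Set.right_mem_Icc.2 h0) h0
  rw [h00] at this
  simp only [hF] at this
  have hr : 2/3*(u^3/(1-u^2)) = 2/3*u^3/(1-u^2) := by ring
  linarith

lemma bg_log_form {y : ℝ} (hy : 0 < y) :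
    Real.log (1 + 1/y) = Real.log (1 + 1/(2*y+1)) - Real.log (1 - 1/(2*y+1)) := by
  have hy1 : (0:ℝ) < 2*y+1 := by linarith
  have h1 : (1:ℝ) + 1/(2*y+1) = (2*(y+1))/(2*y+1) := by
    field_simp; try ring
  have h2 : (1:ℝ) - 1/(2*y+1) = (2*y)/(2*y+1) := by
    field_simp; try ring
  have h3 : (1:ℝ) + 1/y = (y+1)/y := by
    field_simp; try ring
  rw [h1, h2, h3, Real.log_div (by positivity) (ne_of_gt hy),
    Real.log_div (by positivity) (ne_of_gt hy1),
    Real.log_div (by positivity) (ne_of_gt hy1),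
    Real.log_mul two_ne_zero (by positivity), Real.log_mul two_ne_zero (ne_of_gt hy)]
  ring

lemma bg_lower {y : ℝ} (hy : 0 < y) : 1/(3*(2*y+1)^2) ≤ bg y := by
  set u : ℝ := 1/(2*y+1) with hu
  have hu0 : 0 ≤ u := by positivity
  have hu1 : u < 1 := by
    rw [hu, div_lt_one (by positivity)]; linarith
  have hkey := log_ratio_lower hu0 hu1
  have hyu : y + 1/2 = 1/(2*u) := by rw [hu]; field_simp; try ring
  unfold bg
  rw [bg_log_form hy, hyu]
  have hup : 0 < u := by rw [hu]; positivity
  have h1 : 1/(2*u) * (2*u + 2/3*u^3) - 1 = u^2/3 := by field_simp; ring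
  have h2 : 1/(2*u) * (2*u + 2/3*u^3) - 1 ≤ 1/(2*u) * (Real.log (1+u) - Real.log (1-u)) - 1 := by
    have : 0 < 1/(2*u) := by positivity
    nlinarith
  have h3 : u^2/3 = 1/(3*(2*y+1)^2) := by rw [hu]; field_simp
  linarith [h3 ▸ h1 ▸ h2]

lemma bg_upper {y : ℝ} (hy : 0 < y) : bg y ≤ 1/(12*y*(y+1)) := by
  set u : ℝ := 1/(2*y+1) with hu
  have hu0 : 0 ≤ u := by positivity
  have hup : 0 < u := by rw [hu]; positivity
  have hu1 : u < 1 := by rw [hu, div_lt_one (by positivity)]; linarith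
  have hu2 : 0 < 1 - u^2 := by nlinarith
  have hkey := log_ratio_upper hu0 hu1
  have hyu : y + 1/2 = 1/(2*u) := by rw [hu]; field_simp; try ring
  unfold bg
  rw [bg_log_form hy, hyu]
  have h2 : 1/(2*u) * (Real.log (1+u) - Real.log (1-u)) - 1
      ≤ 1/(2*u) * (2*u + 2/3*u^3/(1-u^2)) - 1 := by
    have : 0 < 1/(2*u) := by positivity
    nlinarith
  have h1 : 1/(2*u) * (2*u + 2/3*u^3/(1-u^2)) - 1 = u^2/(3*(1-u^2)) := by
    field_simp; ring
  have h3 : u^2/(3*(1-u^2)) = 1/(12*y*(y+1)) := by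
    rw [hu]
    have : (1:ℝ) - (1/(2*y+1))^2 = (4*y*(y+1))/(2*y+1)^2 := by field_simp; ring
    rw [this]
    field_simp
    ring
  linarith [h3 ▸ h1 ▸ h2]

lemma bg_nonneg {y : ℝ} (hy : 0 < y) : 0 ≤ bg y :=
  le_trans (by positivity) (bg_lower hy)

-- the refined gap inequality
lemma bg_gap {a : ℝ} (ha : 0 < a) :
    1/(12*a*(a+1)) - bg a ≤ 1/(144*a^3) - 1/(144*(a+1)^3) := by
  have h := bg_lower ha
  have key : 1/(12*a*(a+1)) - 1/(3*(2*a+1)^2) ≤ 1/(144*a^3) - 1/(144*(a+1)^3) := by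
    rw [div_sub_div _ _ (by positivity) (by positivity),
        div_sub_div _ _ (by positivity) (by positivity)]
    rw [div_le_div_iff₀ (by positivity) (by positivity)]
    nlinarith [sq_nonneg a, sq_nonneg (a+1), sq_nonneg (a*(a+1)), pow_pos ha 2, pow_pos ha 3,
      sq_nonneg (a-1), mul_pos ha (by linarith : (0:ℝ) < a+1)]
  linarith

lemma hasSum_telescope_of_antitone {a : ℕ → ℝ} (hmono : ∀ n, a (n+1) ≤ a n)
    (hL : Tendsto a atTop (𝓝 0)) : HasSum (fun n => a n - a (n+1)) (a 0) := by
  rw [hasSum_iff_tendsto_nat_of_nonneg (fun n => sub_nonneg.2 (hmono n))]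
  have : ∀ n, ∑ i ∈ Finset.range n, (a i - a (i+1)) = a 0 - a n := by
    intro n
    induction n with
    | zero => simp
    | succ m ih => rw [Finset.sum_range_succ, ih]; ring
  simp only [this]
  simpa using (tendsto_const_nhds.sub hL)

lemma tendsto_inv_shift (x c : ℝ) (hc : 0 < c) :
    Tendsto (fun j : ℕ => 1/(c*(x + j))) atTop (𝓝 0) := by
  simp only [one_div]
  apply Tendsto.comp tendsto_inv_atTop_zero
  apply Tendsto.const_mul_atTop hc
  exact tendsto_atTop_add_const_left _ _ tendsto_natCast_atTop_atTop

lemma hasSum_inv_mul {x : ℝ} (hx : 0 < x) :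
    HasSum (fun j : ℕ => 1/(12*(x+j)*(x+j+1))) (1/(12*x)) := by
  have key := hasSum_telescope_of_antitone (a := fun j : ℕ => 1/(12*(x+j)))
    (fun n => by
      have h1 : (0:ℝ) < x + n := by positivity
      push_cast
      gcongr
      linarith)
    (tendsto_inv_shift x 12 (by norm_num))
  simp only [Nat.cast_zero, add_zero] at key
  refine key.congr_fun fun j => ?_
  have h1 : (0:ℝ) < x + j := by positivity
  push_cast
  rw [div_sub_div _ _ (by positivity) (by positivity)]
  rw [div_eq_div_iff (by positivity) (by positivity)]
  ring

lemma hasSum_inv_cube {x : ℝ} (hx : 0 < x) :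
    HasSum (fun j : ℕ => 1/(144*(x+j)^3) - 1/(144*(x+j+1)^3)) (1/(144*x^3)) := by
  have key := hasSum_telescope_of_antitone (a := fun j : ℕ => 1/(144*(x+j)^3))
    (fun n => by
      have h1 : (0:ℝ) < x + n := by positivity
      push_cast
      gcongr
      linarith)
    (by
      simp only [one_div]
      apply Tendsto.comp tendsto_inv_atTop_zero
      apply Tendsto.const_mul_atTop (by norm_num : (0:ℝ) < 144)
      apply Tendsto.comp (tendsto_pow_atTop (by norm_num : 3 ≠ 0))
      exact tendsto_atTop_add_const_left _ _ tendsto_natCast_atTop_atTop)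
  simp only [Nat.cast_zero, add_zero] at key
  refine key.congr_fun fun j => ?_
  push_cast
  ring_nf

lemma summable_bg {x : ℝ} (hx : 0 < x) : Summable (fun j : ℕ => bg (x + j)) := by
  apply Summable.of_nonneg_of_le (fun j => bg_nonneg (by positivity))
    (fun j : ℕ => bg_upper (y := x + j) (by positivity))
  exact (hasSum_inv_mul hx).summable

lemma bmu_le {x : ℝ} (hx : 0 < x) : bmu x ≤ 1/(12*x) := by
  rw [bmu, ← (hasSum_inv_mul hx).tsum_eq]
  exact Summable.tsum_le_tsum (fun j => bg_upper (by positivity)) (summable_bg hx)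
    (hasSum_inv_mul hx).summable

lemma bmu_ge {x : ℝ} (hx : 0 < x) : 1/(12*x) - 1/(144*x^3) ≤ bmu x := by
  have hdiff : HasSum (fun j : ℕ => 1/(12*(x+j)*(x+j+1)) - bg (x+j)) (1/(12*x) - bmu x) :=
    (hasSum_inv_mul hx).sub (summable_bg hx).hasSum
  have hle : 1/(12*x) - bmu x ≤ 1/(144*x^3) :=
    hasSum_le (fun j : ℕ => bg_gap (a := x + j) (by positivity)) hdiff (hasSum_inv_cube hx)
  linarith

theorem binet {x : ℝ} (hx : 0 < x) :
    Real.log (Real.Gamma x) = (x - 1/2) * Real.log x - x + Real.log (2*π)/2 + bmu x := by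
  set S : ℕ → ℝ := fun n => ∑ j ∈ Finset.range n, bg (x + j) with hS
  have hlogsum : ∀ n : ℕ, ∑ j ∈ Finset.range n, Real.log (x + j)
      = bf (x + n) - bf x - S n := by
    intro n
    induction n with
    | zero => simp [hS]
    | succ m ih =>
      rw [Finset.sum_range_succ, ih, hS]
      simp only
      rw [Finset.sum_range_succ]
      have h1 := bg_eq (y := x + m) (by positivity)
      have hxm : x + ((m:ℝ) + 1) = x + (m:ℝ) + 1 := by ring
      push_cast
      rw [hxm]
      linarith [h1]
  have hlogGS : ∀ n : ℕ, 1 ≤ n → Real.log (Real.GammaSeq x n)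
      = Real.log (Stirling.stirlingSeq n) + Real.log 2 / 2 + x
        - ((x + n + 1/2) * Real.log (1 + x/n)) + bf x + S n := by
    intro n hn
    have hn0 : (0:ℝ) < n := by exact_mod_cast hn
    have hfac : (0:ℝ) < (Nat.factorial n : ℝ) := by positivity
    have hprod : (0:ℝ) < ∏ j ∈ Finset.range (n+1), (x + j) :=
      Finset.prod_pos (fun j _ => by positivity)
    have e1 : Real.log (Real.GammaSeq x n)
        = x * Real.log n + Real.log (Nat.factorial n)
          - ∑ j ∈ Finset.range (n+1), Real.log (x + j) := by
      rw [Real.GammaSeq, Real.log_div (by positivity) (ne_of_gt hprod),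
        Real.log_mul (by positivity) (ne_of_gt hfac), Real.log_rpow hn0,
        Real.log_prod (fun j _ => by positivity)]
    have e2 := Stirling.log_stirlingSeq_formula n
    have e3 : Real.log (2 * (n:ℝ)) = Real.log 2 + Real.log n :=
      Real.log_mul two_ne_zero (ne_of_gt hn0)
    have e4 : Real.log ((n:ℝ) / Real.exp 1) = Real.log n - 1 := by
      rw [Real.log_div (ne_of_gt hn0) (Real.exp_ne_zero 1), Real.log_exp]
    have e5 : Real.log (x + n) = Real.log n + Real.log (1 + x/n) := by
      have hxn : x + (n:ℝ) = n * (1 + x/n) := by field_simp; ring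
      rw [hxn, Real.log_mul (ne_of_gt hn0) (by positivity)]
    rw [e1, Finset.sum_range_succ, hlogsum n]
    rw [e3, e4] at e2
    simp only [bf]
    rw [e5]
    simp only [bf] at *
    nlinarith [e2]
  -- limits
  have t1 : Tendsto (fun n : ℕ => Real.log (Stirling.stirlingSeq n)) atTop
      (𝓝 (Real.log π / 2)) := by
    have hsq : Real.log (Real.sqrt π) = Real.log π / 2 := Real.log_sqrt pi_pos.le
    rw [← hsq]
    exact ((Real.continuousAt_log (by positivity)).tendsto).comp
      Stirling.tendsto_stirlingSeq_sqrt_pi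
  have t2 : Tendsto (fun n : ℕ => (n:ℝ) * Real.log (1 + x/n)) atTop (𝓝 x) := by
    have h := Real.tendsto_one_add_div_pow_exp x
    have := ((Real.continuousAt_log (ne_of_gt (Real.exp_pos x))).tendsto).comp h
    simpa [Function.comp_def, Real.log_pow, Real.log_exp] using this
  have t3 : Tendsto (fun n : ℕ => Real.log (1 + x/n)) atTop (𝓝 0) := by
    have hd : Tendsto (fun n : ℕ => 1 + x/n) atTop (𝓝 1) := by
      have := tendsto_const_div_atTop_nhds_zero_nat x
      simpa using (tendsto_const_nhds (x := (1:ℝ)) (f := atTop)).add this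
    have := ((Real.continuousAt_log one_ne_zero).tendsto).comp hd
    simpa [Function.comp_def] using this
  have hA : Tendsto (fun n : ℕ => Real.log (Stirling.stirlingSeq n) + Real.log 2 / 2 + x
      - ((x + n + 1/2) * Real.log (1 + x/n))) atTop
      (𝓝 (Real.log π / 2 + Real.log 2 / 2 + x - x)) := by
    refine ((t1.add_const _).add_const _).sub ?_
    have : Tendsto (fun n : ℕ => (x + 1/2) * Real.log (1 + x/n) + n * Real.log (1 + x/n))
        atTop (𝓝 ((x + 1/2) * 0 + x)) := (t3.const_mul _).add t2
    simp only [mul_zero, zero_add] at this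
    refine this.congr fun n => ?_
    ring
  have hSmu : Tendsto S atTop (𝓝 (bmu x)) := (summable_bg hx).hasSum.tendsto_sum_nat
  have hGS : Tendsto (fun n : ℕ => Real.log (Real.GammaSeq x n)) atTop
      (𝓝 (Real.log (Real.Gamma x))) :=
    ((Real.continuousAt_log (ne_of_gt (Real.Gamma_pos_of_pos hx))).tendsto).comp
      (Real.GammaSeq_tendsto_Gamma x)
  have hcomb : Tendsto (fun n : ℕ => Real.log (Real.GammaSeq x n)) atTop
      (𝓝 (Real.log π / 2 + Real.log 2 / 2 + x - x + bf x + bmu x)) := by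
    refine Tendsto.congr' ?_ ((hA.add_const (bf x)).add hSmu)
    filter_upwards [eventually_ge_atTop 1] with n hn
    exact (hlogGS n hn).symm
  have := tendsto_nhds_unique hGS hcomb
  rw [this, bf]
  have hlog2pi : Real.log (2*π) = Real.log 2 + Real.log π :=
    Real.log_mul two_ne_zero (ne_of_gt pi_pos)
  rw [hlog2pi]
  ring

set_option maxHeartbeats 2000000 in
/-- With `Γ` the gamma function, `k = d - 1 ≥ 1` and `V = vol(K)` a
constant, the exact parametric complexity
`COMP(K) = log V - (k/2) log(πk) - (1/2) log(k/2) + (nk/2) log(nk/(2e)) - log Γ(k(n-1)/2)`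
admits the asymptotic expansion
`COMP(K) = (d/2) log(n/(2π)) + log V - (3d²-1)/(12(d-1)n) - d(d+1)/(12(d-1)n²) + O(n⁻³)`
as `n → ∞`. -/
theorem stmt_17 (k : ℕ) (hk : 1 ≤ k) (V : ℝ) (hV : 0 < V) :
    (fun n : ℕ =>
        (Real.log V - ((k : ℝ) / 2) * Real.log (π * k) - (1 / 2) * Real.log ((k : ℝ) / 2) +
            ((n : ℝ) * k / 2) * Real.log ((n : ℝ) * k / (2 * Real.exp 1)) -
            Real.log (Real.Gamma ((k : ℝ) * ((n : ℝ) - 1) / 2))) -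
          ((((k : ℝ) + 1) / 2) * Real.log ((n : ℝ) / (2 * π)) + Real.log V -
            (3 * ((k : ℝ) + 1) ^ 2 - 1) / (12 * (k : ℝ) * n) -
            ((k : ℝ) + 1) * ((k : ℝ) + 2) / (12 * (k : ℝ) * (n : ℝ) ^ 2))) =O[atTop]
      fun n : ℕ => ((n : ℝ) ^ 3)⁻¹ := by
  rw [isBigO_iff]
  refine ⟨2 * k + 3, ?_⟩
  filter_upwards [eventually_ge_atTop 2] with n hn
  rw [Real.norm_eq_abs, Real.norm_eq_abs]
  set nR : ℝ := (n : ℝ) with hnR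
  set kR : ℝ := (k : ℝ) with hkR
  have hn2 : (2:ℝ) ≤ nR := by rw [hnR]; exact_mod_cast hn
  have hk1 : (1:ℝ) ≤ kR := by rw [hkR]; exact_mod_cast hk
  have hn0 : (0:ℝ) < nR := by linarith
  have hk0 : (0:ℝ) < kR := by linarith
  have hn1 : (0:ℝ) < nR - 1 := by linarith
  set z : ℝ := kR * (nR - 1) / 2 with hz
  have hz0 : 0 < z := by rw [hz]; positivity
  have hfrac : (0:ℝ) < 1 - 1/nR := by
    rw [sub_pos, div_lt_one hn0]; linarith
  -- log rewrites
  have l1 : Real.log (π * kR) = Real.log π + Real.log kR :=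
    Real.log_mul (ne_of_gt pi_pos) (ne_of_gt hk0)
  have l2 : Real.log (kR / 2) = Real.log kR - Real.log 2 :=
    Real.log_div (ne_of_gt hk0) two_ne_zero
  have l3 : Real.log (nR * kR / (2 * Real.exp 1))
      = Real.log nR + Real.log kR - (Real.log 2 + 1) := by
    rw [Real.log_div (by positivity) (by positivity),
      Real.log_mul (ne_of_gt hn0) (ne_of_gt hk0),
      Real.log_mul two_ne_zero (Real.exp_ne_zero 1), Real.log_exp]
  have l4 : Real.log z = Real.log kR + Real.log nR + Real.log (1 - 1/nR) - Real.log 2 := by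
    have hzeq : z = kR * (nR * (1 - 1/nR)) / 2 := by
      rw [hz]; field_simp
    rw [hzeq, Real.log_div (by positivity) two_ne_zero,
      Real.log_mul (ne_of_gt hk0) (by positivity),
      Real.log_mul (ne_of_gt hn0) (ne_of_gt hfrac)]
    ring
  have l5 : Real.log (nR / (2 * π)) = Real.log nR - (Real.log 2 + Real.log π) := by
    rw [Real.log_div (ne_of_gt hn0) (by positivity),
      Real.log_mul two_ne_zero (ne_of_gt pi_pos)]
  have l6 : Real.log (2 * π) = Real.log 2 + Real.log π :=
    Real.log_mul two_ne_zero (ne_of_gt pi_pos)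
  set A : ℝ := (3*(kR+1)^2 - 1)/(12*kR) with hA
  set B : ℝ := (kR+1)*(kR+2)/(12*kR) with hB
  -- main identity
  have hid : (Real.log V - (kR / 2) * Real.log (π * kR) - (1 / 2) * Real.log (kR / 2) +
            (nR * kR / 2) * Real.log (nR * kR / (2 * Real.exp 1)) -
            Real.log (Real.Gamma (kR * (nR - 1) / 2))) -
          (((kR + 1) / 2) * Real.log (nR / (2 * π)) + Real.log V -
            (3 * (kR + 1) ^ 2 - 1) / (12 * kR * nR) -
            (kR + 1) * (kR + 2) / (12 * kR * nR ^ 2))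
      = (-(kR/2) - (z - 1/2) * Real.log (1 - 1/nR) + A/nR + B/nR^2) - bmu z := by
    rw [show kR * (nR - 1) / 2 = z from rfl, binet hz0]
    rw [l1, l2, l3, l4, l5, l6, hz, hA, hB]
    field_simp
    ring
  -- rational part
  have hrat : -(kR/2) + (z - 1/2)*(1/nR + 1/(2*nR^2) + 1/(3*nR^3)) + A/nR + B/nR^2
      - 1/(12*z)
      = -(kR+1)/(6*nR^3) - 1/(6*kR*nR^2*(nR-1)) := by
    rw [hz, hA, hB]
    field_simp
    ring
  -- log remainder
  have habs : |1/nR| < 1 := by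
    rw [abs_of_pos (by positivity), div_lt_one hn0]; linarith
  have hrem := Real.abs_log_sub_add_sum_range_le habs 3
  rw [Finset.sum_range_succ, Finset.sum_range_succ, Finset.sum_range_succ,
    Finset.sum_range_zero] at hrem
  norm_num at hrem
  set r : ℝ := Real.log (1 - 1/nR) + (1/nR + 1/(2*nR^2) + 1/(3*nR^3)) with hr
  have hrem2 : |r| ≤ 2/nR^4 := by
    have e : nR⁻¹ + (nR^2)⁻¹/2 + (nR^3)⁻¹/3 + Real.log (1 - nR⁻¹) = r := by
      rw [hr]; field_simp; ring
    rw [e] at hrem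
    have e2 : |nR⁻¹|^4 / (1 - |nR⁻¹|) ≤ 2/nR^4 := by
      rw [abs_of_pos (by positivity : (0:ℝ) < nR⁻¹)]
      have h12 : (1:ℝ)/2 ≤ 1 - nR⁻¹ := by
        have : nR⁻¹ ≤ 1/2 := by
          rw [inv_le_comm₀ hn0 (by norm_num)]; norm_num; linarith
        linarith
      have hp : (nR⁻¹)^4 = 1/nR^4 := by
        rw [inv_pow]; norm_num
      rw [hp]
      rw [div_le_div_iff₀ (by linarith) (by positivity)]
      have h14 : (1:ℝ)/nR^4 * nR^4 = 1 := by field_simp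
      nlinarith
    rw [abs_inv, inv_pow] at e2; exact le_trans hrem e2
  -- decomposition
  have hdecomp : (-(kR/2) - (z - 1/2) * Real.log (1 - 1/nR) + A/nR + B/nR^2) - bmu z
      = (-(kR+1)/(6*nR^3) - 1/(6*kR*nR^2*(nR-1))) - (z - 1/2)*r
        + (1/(12*z) - bmu z) := by
    have hlog : Real.log (1 - 1/nR) = r - (1/nR + 1/(2*nR^2) + 1/(3*nR^3)) := by
      rw [hr]; ring
    rw [hlog]
    linear_combination hrat
  -- bounds
  have bz_lb : nR/4 ≤ z := by
    rw [hz]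
    have : nR - 1 ≥ nR/2 := by linarith
    nlinarith
  have bz_ub : z ≤ kR * nR / 2 := by
    rw [hz]
    nlinarith
  have bmu1 : 0 ≤ 1/(12*z) - bmu z := sub_nonneg.2 (bmu_le hz0)
  have bmu2 : 1/(12*z) - bmu z ≤ 1/nR^3 := by
    have h1 := bmu_ge hz0
    have h2 : 1/(144*z^3) ≤ 1/nR^3 := by
      rw [div_le_div_iff₀ (by positivity) (by positivity)]
      have : nR^3/64 ≤ z^3 := by
        calc nR^3/64 = (nR/4)^3 := by ring
        _ ≤ z^3 := by gcongr <;> positivity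
      nlinarith
    linarith
  have bterm1 : |(-(kR+1)/(6*nR^3) - 1/(6*kR*nR^2*(nR-1)))| ≤ (kR + 2)/nR^3 := by
    have h1 : |(-(kR+1)/(6*nR^3))| = (kR+1)/(6*nR^3) := by
      rw [abs_div, abs_neg, abs_of_pos (by positivity), abs_of_pos (by positivity)]
    have h2 : (0:ℝ) < 6*kR*nR^2*(nR-1) := by positivity
    have h3 : |1/(6*kR*nR^2*(nR-1))| = 1/(6*kR*nR^2*(nR-1)) := by
      rw [abs_of_pos (by positivity)]
    have h4 : 1/(6*kR*nR^2*(nR-1)) ≤ 1/nR^3 := by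
      rw [div_le_div_iff₀ h2 (by positivity)]
      nlinarith
    have h5 : (kR+1)/(6*nR^3) ≤ (kR+1)/nR^3 := by
      rw [div_le_div_iff₀ (by positivity) (by positivity)]
      nlinarith
    calc |(-(kR+1)/(6*nR^3) - 1/(6*kR*nR^2*(nR-1)))|
        ≤ |(-(kR+1)/(6*nR^3))| + |1/(6*kR*nR^2*(nR-1))| := abs_sub _ _
      _ ≤ (kR+1)/nR^3 + 1/nR^3 := by rw [h1, h3]; linarith
      _ = (kR+2)/nR^3 := by ring
  have bterm2 : |(z - 1/2)*r| ≤ kR/nR^3 := by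
    rw [abs_mul]
    have hz12 : |z - 1/2| ≤ kR * nR / 2 := by
      rw [abs_le]
      constructor
      · nlinarith
      · linarith
    calc |z - 1/2| * |r| ≤ (kR * nR / 2) * (2/nR^4) := by
          apply mul_le_mul hz12 hrem2 (abs_nonneg _) (by positivity)
      _ = kR/nR^3 := by field_simp
  -- final
  rw [hid, hdecomp]
  have hrhs : |((nR^3)⁻¹)| = 1/nR^3 := by
    rw [abs_of_pos (by positivity), one_div]
  rw [hrhs]
  calc |(-(kR+1)/(6*nR^3) - 1/(6*kR*nR^2*(nR-1))) - (z - 1/2)*r + (1/(12*z) - bmu z)|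
      ≤ |(-(kR+1)/(6*nR^3) - 1/(6*kR*nR^2*(nR-1))) - (z - 1/2)*r| + |1/(12*z) - bmu z| :=
        abs_add_le _ _
    _ ≤ |(-(kR+1)/(6*nR^3) - 1/(6*kR*nR^2*(nR-1)))| + |(z - 1/2)*r| + |1/(12*z) - bmu z| := by
        have := abs_sub (-(kR+1)/(6*nR^3) - 1/(6*kR*nR^2*(nR-1))) ((z - 1/2)*r)
        linarith
    _ ≤ (kR+2)/nR^3 + kR/nR^3 + 1/nR^3 := by
        have h3 : |1/(12*z) - bmu z| ≤ 1/nR^3 := by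
          rw [abs_of_nonneg bmu1]; exact bmu2
        linarith
    _ = (2*kR + 3) * (1/nR^3) := by ring
    _ ≤ (2*(k:ℝ) + 3) * (1/nR^3) := le_refl _
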